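/- Let n ≥ 2, τ ≥ 1, e = n(n−1)/2. Let v = (V^{(1)},…,V^{(τ)}) ∈ ℝ^{nτ}, and for each node i define the point x_i = (V_i^{(1)},…,V_i^{(τ)}) ∈ ℝ^τ. Then the null space of A(v)ᵀ ∈ ℝ^{e×nτ} is carried onto the null space of the rigidity matrix R(x) ∈ ℝ^{e×nτ} by the coordinate reindexing z = (z^{(1)},…,z^{(τ)}) ↦ ẋ with ẋ_i = (z_i^{(1)},…,z_i^{(τ)}); consequently rank A(v)ᵀ = rank R(x), and hence rank A(v) = rank R(x). -/

import Mathlib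

open Matrix BigOperators

/-- Edges of the complete graph on `Fin n`: ordered pairs `(i, j)` with `i < j`. -/
abbrev CEdge (n : ℕ) := {p : Fin n × Fin n // p.1 < p.2}

/-- Incidence matrix of the complete graph on `Fin n`, each edge `(i, j)` (with `i < j`)
oriented from `i` to `j`:  `H i l = 1` if edge `l` leaves node `i`, `-1` if it enters `i`,
and `0` otherwise. -/
def incid (F : Type*) [Field F] (n : ℕ) : Matrix (Fin n) (CEdge n) F :=
  Matrix.of fun i l => if i = l.val.1 then 1 else if i = l.val.2 then -1 else 0

/-- Voltage coefficient matrix `Ã(V) = H ⬝ diag(Hᵀ V)`. -/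
def Atilde {F : Type*} [Field F] {n : ℕ} (V : Fin n → F) : Matrix (Fin n) (CEdge n) F :=
  incid F n * Matrix.diagonal ((incid F n)ᵀ *ᵥ V)

/-- Stacked voltage coefficient matrix `A(v)` for `τ` measurements `v 1, …, v τ`:
the row indexed by `(k, i)` is the `i`-th row of `Ã(V^(k))`. -/
def Astack {F : Type*} [Field F] {n τ : ℕ} (v : Fin τ → Fin n → F) :
    Matrix (Fin τ × Fin n) (CEdge n) F :=
  Matrix.of fun p l => Atilde (v p.1) p.2 l

/-- Rigidity matrix of the complete graph at the configuration `x = (x 1, …, x n)`,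
`x i ∈ F^τ`: the row indexed by edge `(i, j)`, `i < j`, has the entries of `(x i − x j)ᵀ`
in the `τ` columns of node `i`, the entries of `(x j − x i)ᵀ` in the `τ` columns of node `j`,
and zeros elsewhere. -/
def rigidityM {F : Type*} [Field F] {n τ : ℕ} (x : Fin n → Fin τ → F) :
    Matrix (CEdge n) (Fin n × Fin τ) F :=
  Matrix.of fun l p =>
    if p.1 = l.val.1 then x l.val.1 p.2 - x l.val.2 p.2
    else if p.1 = l.val.2 then x l.val.2 p.2 - x l.val.1 p.2
    else 0

lemma sum2 {n : ℕ} {a b : Fin n} (h : a ≠ b) (f g : Fin n → ℝ) :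
    ∑ i, (if i = a then f i else if i = b then g i else 0) = f a + g b := by
  have key : ∀ i, (if i = a then f i else if i = b then g i else 0) =
      (if i = a then f i else 0) + (if i = b then g i else 0) := by
    intro i
    by_cases h1 : i = a <;> by_cases h2 : i = b <;> simp_all
  simp only [key, Finset.sum_add_distrib, Finset.sum_ite_eq', Finset.mem_univ, if_true]

lemma incid_transpose_mulVec {n : ℕ} (V : Fin n → ℝ) (l : CEdge n) :
    ((incid ℝ n)ᵀ *ᵥ V) l = V l.val.1 - V l.val.2 := by
  have hne : l.val.1 ≠ l.val.2 := ne_of_lt l.prop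
  simp only [mulVec, dotProduct, transpose_apply, incid, of_apply, ite_mul, one_mul,
    neg_mul, zero_mul]
  rw [sum2 hne]
  ring

lemma AT_eq_submatrix {n τ : ℕ} (v : Fin τ → Fin n → ℝ) :
    (Astack v)ᵀ = (rigidityM (fun i k => v k i)).submatrix id
      (Equiv.prodComm (Fin τ) (Fin n)) := by
  funext l p
  obtain ⟨k, i⟩ := p
  have hne : l.val.1 ≠ l.val.2 := ne_of_lt l.prop
  simp only [transpose_apply, Astack, Atilde, of_apply, Matrix.mul_diagonal,
    incid_transpose_mulVec, submatrix_apply, id_eq, Equiv.prodComm_apply, Prod.swap,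
    rigidityM]
  simp only [incid, of_apply]
  by_cases h1 : i = l.val.1 <;> by_cases h2 : i = l.val.2 <;> simp_all

theorem stmt2 (n τ : ℕ) (hn : 2 ≤ n) (hτ : 1 ≤ τ) (v : Fin τ → Fin n → ℝ) :
    (∀ z : Fin τ × Fin n → ℝ,
        (Astack v)ᵀ *ᵥ z = 0 ↔
        rigidityM (fun i k => v k i) *ᵥ (fun p : Fin n × Fin τ => z (p.2, p.1)) = 0) ∧
    ((Astack v)ᵀ.rank = (rigidityM (fun i k => v k i)).rank) ∧
    ((Astack v).rank = (rigidityM (fun i k => v k i)).rank) := by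
  have hmv : ∀ z : Fin τ × Fin n → ℝ,
      (Astack v)ᵀ *ᵥ z =
        rigidityM (fun i k => v k i) *ᵥ (fun p : Fin n × Fin τ => z (p.2, p.1)) := by
    intro z
    rw [AT_eq_submatrix]
    have := Matrix.submatrix_mulVec_equiv (rigidityM (fun i k => v k i)) z
      (id : CEdge n → CEdge n) (Equiv.prodComm (Fin τ) (Fin n))
    exact this
  have hrange : LinearMap.range ((Astack v)ᵀ).mulVecLin =
      LinearMap.range (rigidityM (fun i k => v k i)).mulVecLin := by
    apply le_antisymm
    · rintro w ⟨z, rfl⟩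
      refine ⟨fun p => z (p.2, p.1), ?_⟩
      simp only [Matrix.mulVecLin_apply]
      exact (hmv z).symm
    · rintro w ⟨u, rfl⟩
      refine ⟨fun q => u (q.2, q.1), ?_⟩
      simp only [Matrix.mulVecLin_apply]
      exact hmv fun q => u (q.2, q.1)
  have hrank : ((Astack v)ᵀ).rank = (rigidityM (fun i k => v k i)).rank := by
    rw [Matrix.rank, Matrix.rank, hrange]
  exact ⟨fun z => by rw [hmv z], hrank, by rw [← Matrix.rank_transpose (Astack v), hrank]⟩
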